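/- Fix integers N ≥ 1 and K ≥ 1, and parameters W_k > 0, ε_k > 0, β_k ∈ ℝ for k ∈ {0,…,K−1}, and budgets R_i > 0 for i ∈ {1,…,N}. Let X_i = {x ∈ ℝ^K : x_k ≥ 0 for all k and Σ_{k} x_k = R_i}, and define u_i(x) = Σ_{k=0}^{K−1} [ W_k·x_{i,k}/(Σ_{j=1}^N x_{j,k} + ε_k) − β_k·x_{i,k} ] for x ∈ Π_j X_j. Then this game admits exactly one Nash equilibrium. -/

import Mathlib

open Finset

open Finset

namespace Blotto

/-- payoff of one battlefield as a function of own allocation `s`, opponents+ε aggregated in `c` -/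
noncomputable def phi (Wk bk c s : ℝ) : ℝ := Wk * s / (s + c) - bk * s
/-- its derivative -/
noncomputable def phi' (Wk bk c s : ℝ) : ℝ := Wk * c / (s + c)^2 - bk

lemma key_id (Wk bk c a b : ℝ) (hc : 0 < c) (ha : 0 ≤ a) (hb : 0 ≤ b) :
    phi Wk bk c b - phi Wk bk c a
      = (b - a) * phi' Wk bk c a - Wk * c * (b-a)^2 / ((b+c)*(a+c)^2) := by
  have h1 : a + c ≠ 0 := by positivity
  have h2 : b + c ≠ 0 := by positivity
  unfold phi phi'
  field_simp
  ring

lemma concave_bound {K : ℕ} (W bv c : Fin K → ℝ) (hW : ∀ k, 0 < W k) (hc : ∀ k, 0 < c k)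
    (y w : Fin K → ℝ) (hy : ∀ k, 0 ≤ y k) (hw : ∀ k, 0 ≤ w k) :
    (∑ k, phi (W k) (bv k) (c k) (w k)) - (∑ k, phi (W k) (bv k) (c k) (y k))
      ≤ ∑ k, (w k - y k) * phi' (W k) (bv k) (c k) (y k) := by
  rw [← Finset.sum_sub_distrib]
  apply Finset.sum_le_sum
  intro k _
  rw [key_id (W k) (bv k) (c k) (y k) (w k) (hc k) (hy k) (hw k)]
  have : 0 ≤ W k * c k * (w k - y k)^2 / ((w k + c k)*(y k + c k)^2) := by
    have := hW k; have := hc k; have := hy k; have := hw k; positivity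
  linarith

lemma le_zero_of_le_mul (A B : ℝ) (hB : 0 ≤ B) (h : ∀ t : ℝ, 0 < t → t ≤ 1 → A ≤ t * B) : A ≤ 0 := by
  by_contra hA
  push_neg at hA
  have hAB : A ≤ B := by simpa using h 1 one_pos le_rfl
  have hBpos : 0 < B := lt_of_lt_of_le hA hAB
  have ht1 : (0:ℝ) < A / (2*B) := by positivity
  have ht2 : A / (2*B) ≤ 1 := by
    rw [div_le_one (by positivity)]; linarith
  have := h _ ht1 ht2
  have : A ≤ A / 2 := by
    calc A ≤ A / (2*B) * B := this
    _ = A / 2 := by field_simp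
  linarith


def simplex {K : ℕ} (Ri : ℝ) : Set (Fin K → ℝ) := {x | (∀ k, 0 ≤ x k) ∧ ∑ k, x k = Ri}

lemma seg_mem {K : ℕ} {Ri : ℝ} {y w : Fin K → ℝ} (hy : y ∈ simplex Ri) (hw : w ∈ simplex Ri)
    {t : ℝ} (h0 : 0 ≤ t) (h1 : t ≤ 1) : (fun k => y k + t * (w k - y k)) ∈ simplex Ri := by
  constructor
  · intro k
    have h := hy.1 k; have h' := hw.1 k
    have : y k + t * (w k - y k) = (1-t) * y k + t * w k := by ring
    show 0 ≤ y k + t * (w k - y k)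
    rw [this]
    have := sub_nonneg.2 h1
    positivity
  · have : ∑ k, (y k + t * (w k - y k)) = (∑ k, y k) + t * ((∑ k, w k) - ∑ k, y k) := by
      rw [Finset.sum_add_distrib, ← Finset.mul_sum, Finset.sum_sub_distrib]
    rw [this, hy.2, hw.2]; ring

lemma linearized {K : ℕ} (W bv c : Fin K → ℝ) (hW : ∀ k, 0 < W k) (hc : ∀ k, 0 < c k)
    {Ri : ℝ} {y w : Fin K → ℝ} (hy : y ∈ simplex Ri) (hw : w ∈ simplex Ri)
    (hmax : ∀ t : ℝ, 0 < t → t ≤ 1 →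
      ∑ k, phi (W k) (bv k) (c k) (y k + t * (w k - y k)) ≤ ∑ k, phi (W k) (bv k) (c k) (y k)) :
    ∑ k, (w k - y k) * phi' (W k) (bv k) (c k) (y k) ≤ 0 := by
  apply le_zero_of_le_mul _ (∑ k, W k * (w k - y k)^2 / (y k + c k)^2)
  · apply Finset.sum_nonneg
    intro k _
    have := hW k; have := hc k; have := hy.1 k
    positivity
  · intro t ht0 ht1
    have hseg := seg_mem hy hw (le_of_lt ht0) ht1
    have hdiff : ∀ k ∈ Finset.univ,
        phi (W k) (bv k) (c k) (y k + t * (w k - y k)) - phi (W k) (bv k) (c k) (y k)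
        = t * ((w k - y k) * phi' (W k) (bv k) (c k) (y k))
          - W k * c k * (t*(w k - y k))^2 / ((y k + t * (w k - y k) + c k)*(y k + c k)^2) := by
      intro k _
      rw [key_id (W k) (bv k) (c k) (y k) (y k + t * (w k - y k)) (hc k) (hy.1 k) (hseg.1 k)]
      ring_nf
    have hsum := hmax t ht0 ht1
    rw [← sub_nonpos, ← Finset.sum_sub_distrib, Finset.sum_congr rfl hdiff,
        Finset.sum_sub_distrib, sub_nonpos, ← Finset.mul_sum] at hsum
    -- hsum : t * Σ (w-y)φ' ≤ Σ Wc(tδ)²/(...)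
    have hbound : ∑ k, W k * c k * (t*(w k - y k))^2 / ((y k + t * (w k - y k) + c k)*(y k + c k)^2)
        ≤ t^2 * ∑ k, W k * (w k - y k)^2 / (y k + c k)^2 := by
      rw [Finset.mul_sum]
      apply Finset.sum_le_sum
      intro k _
      have hWk := hW k; have hck := hc k; have hyk := hy.1 k; have hsk := hseg.1 k
      rw [div_le_iff₀ (by positivity)]
      have expand : t^2 * (W k * (w k - y k)^2 / (y k + c k)^2) * ((y k + t * (w k - y k) + c k)*(y k + c k)^2)
          = W k * (t * (w k - y k))^2 * (y k + t * (w k - y k) + c k) / (y k + c k)^2 * (y k + c k)^2 / (y k + c k)^2 * (y k + c k)^2 := by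
        field_simp
      have hsk' : 0 ≤ y k + t * (w k - y k) := hsk
      have key : W k * c k * (t*(w k - y k))^2 ≤ W k * (t*(w k - y k))^2 * (y k + t * (w k - y k) + c k) := by
        nlinarith [mul_nonneg (mul_nonneg hWk.le (sq_nonneg (t*(w k - y k)))) hsk']
      calc W k * c k * (t*(w k - y k))^2
          ≤ W k * (t*(w k - y k))^2 * (y k + t * (w k - y k) + c k) := key
        _ = t^2 * (W k * (w k - y k)^2 / (y k + c k)^2) * ((y k + t * (w k - y k) + c k)*(y k + c k)^2) := by
            field_simp
    have h2 := le_trans hsum hbound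
    have h3 : t * (∑ k, (w k - y k) * phi' (W k) (bv k) (c k) (y k))
        ≤ t * (t * ∑ k, W k * (w k - y k)^2 / (y k + c k)^2) := by
      calc t * (∑ k, (w k - y k) * phi' (W k) (bv k) (c k) (y k))
          ≤ t^2 * ∑ k, W k * (w k - y k)^2 / (y k + c k)^2 := h2
        _ = t * (t * ∑ k, W k * (w k - y k)^2 / (y k + c k)^2) := by ring
    exact le_of_mul_le_mul_left h3 ht0


section Game
variable {N K : ℕ} (W ε β : Fin K → ℝ) (R : Fin N → ℝ)

def feas (x : Fin N → Fin K → ℝ) : Prop := ∀ i, x i ∈ simplex (R i)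

noncomputable def Sagg (x : Fin N → Fin K → ℝ) (k : Fin K) : ℝ := ∑ i, x i k

noncomputable def cC (x : Fin N → Fin K → ℝ) (i : Fin N) (k : Fin K) : ℝ :=
  Sagg x k - x i k + ε k

noncomputable def Gp (x : Fin N → Fin K → ℝ) (i : Fin N) (k : Fin K) : ℝ :=
  phi' (W k) (β k) (cC ε x i k) (x i k)

noncomputable def U (x : Fin N → Fin K → ℝ) (i : Fin N) : ℝ :=
  ∑ k, (W k * x i k / (Sagg x k + ε k) - β k * x i k)

lemma cC_pos (hε : ∀ k, 0 < ε k) {x : Fin N → Fin K → ℝ} (hx : ∀ j, ∀ k, 0 ≤ x j k)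
    (i : Fin N) (k : Fin K) : 0 < cC ε x i k := by
  have h : Sagg x k - x i k = ∑ j ∈ Finset.univ.erase i, x j k := by
    rw [Finset.sum_erase_eq_sub (Finset.mem_univ i)]; rfl
  have h2 : 0 ≤ Sagg x k - x i k := by
    rw [h]; exact Finset.sum_nonneg fun j _ => hx j k
  have := hε k
  unfold cC; linarith

lemma sum_update_col (x : Fin N → Fin K → ℝ) (i : Fin N) (v : Fin K → ℝ) (k : Fin K) :
    ∑ j, Function.update x i v j k = v k + (Sagg x k - x i k) := by
  have h1 : ∑ j, Function.update x i v j k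
      = Function.update x i v i k + ∑ j ∈ Finset.univ.erase i, Function.update x i v j k :=
    (Finset.add_sum_erase _ (fun j => Function.update x i v j k) (Finset.mem_univ i)).symm
  rw [h1, Function.update_self]
  congr 1
  rw [show Sagg x k - x i k = ∑ j ∈ Finset.univ.erase i, x j k by
    rw [Finset.sum_erase_eq_sub (Finset.mem_univ i)]; rfl]
  apply Finset.sum_congr rfl
  intro j hj
  rw [Function.update_of_ne (Finset.mem_erase.1 hj).1]

lemma U_update (x : Fin N → Fin K → ℝ) (i : Fin N) (v : Fin K → ℝ) :
    U W ε β (Function.update x i v) i = ∑ k, phi (W k) (β k) (cC ε x i k) (v k) := by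
  unfold U phi
  apply Finset.sum_congr rfl
  intro k _
  have h : Sagg (Function.update x i v) k = v k + (Sagg x k - x i k) := sum_update_col x i v k
  rw [h, Function.update_self]
  unfold cC
  ring_nf

lemma U_self (x : Fin N → Fin K → ℝ) (i : Fin N) :
    U W ε β x i = ∑ k, phi (W k) (β k) (cC ε x i k) (x i k) := by
  have := U_update W ε β x i (x i)
  rwa [Function.update_eq_self] at this

/-- Nash equilibrium property (in terms of U). -/
def NEq (x : Fin N → Fin K → ℝ) : Prop :=
  feas R x ∧ ∀ i : Fin N, ∀ y ∈ simplex (R i), U W ε β (Function.update x i y) i ≤ U W ε β x i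

/-- Variational inequality property. -/
def VIx (x : Fin N → Fin K → ℝ) : Prop :=
  feas R x ∧ ∀ w, feas R w → ∑ i, ∑ k, (w i k - x i k) * Gp W ε β x i k ≤ 0

variable (hW : ∀ k, 0 < W k) (hε : ∀ k, 0 < ε k)

include hW hε in
lemma NE_to_VI {x : Fin N → Fin K → ℝ} (h : NEq W ε β R x) : VIx W ε β R x := by
  obtain ⟨hfeas, hne⟩ := h
  refine ⟨hfeas, fun w hw => ?_⟩
  apply Finset.sum_nonpos
  intro i _
  have hx0 : ∀ j k, 0 ≤ x j k := fun j k => (hfeas j).1 k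
  apply linearized (W) (β) (cC ε x i) hW (cC_pos ε hε hx0 i) (hfeas i) (hw i)
  intro t ht0 ht1
  have hseg := seg_mem (hfeas i) (hw i) (le_of_lt ht0) ht1
  have := hne i _ hseg
  rwa [U_update, U_self] at this

include hW hε in
lemma VI_to_NE {x : Fin N → Fin K → ℝ} (h : VIx W ε β R x) : NEq W ε β R x := by
  obtain ⟨hfeas, hvi⟩ := h
  refine ⟨hfeas, fun i y hy => ?_⟩
  have hx0 : ∀ j k, 0 ≤ x j k := fun j k => (hfeas j).1 k
  set w := Function.update x i y with hwdef
  have hwfeas : feas R w := by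
    intro j
    by_cases hji : j = i
    · subst hji; rw [hwdef, Function.update_self]; exact hy
    · rw [hwdef, Function.update_of_ne hji]; exact hfeas j
  have hvi' := hvi w hwfeas
  have hsingle : ∑ i', ∑ k, (w i' k - x i' k) * Gp W ε β x i' k
      = ∑ k, (y k - x i k) * Gp W ε β x i k := by
    rw [Finset.sum_eq_single i]
    · rw [hwdef]; simp [Function.update_self]
    · intro j _ hji
      rw [hwdef]
      simp [Function.update_of_ne hji]
    · intro hi; exact absurd (Finset.mem_univ i) hi
  rw [hsingle] at hvi'
  rw [U_update, U_self]
  have hcb := concave_bound (W) (β) (cC ε x i) hW (cC_pos ε hε hx0 i) (x i) y (hfeas i).1 hy.1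
  have : ∑ k, (y k - x i k) * phi' (W k) (β k) (cC ε x i k) (x i k) ≤ 0 := hvi'
  linarith

end Game

section Mono
variable {N : ℕ}

lemma core_ineq (d z : Fin N → ℝ) (hz : ∀ i, 0 ≤ z i) :
    2 * (∑ i, d i) * (∑ i, d i * z i)
      ≤ (∑ i, z i) * ((∑ i, d i)^2 + ∑ i, d i^2) := by
  set B := ∑ i, d i with hB
  set Z := ∑ i, d i * z i with hZ
  set D := ∑ i, d i^2 with hD
  set s := ∑ i, z i with hs
  have hs0 : 0 ≤ s := Finset.sum_nonneg fun i _ => hz i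
  have hD0 : 0 ≤ D := Finset.sum_nonneg fun i _ => sq_nonneg _
  have hZsq : Z^2 ≤ D * s^2 := by
    have h1 : Z^2 ≤ D * ∑ i, z i ^2 := by
      rw [hZ, hD]
      exact Finset.sum_mul_sq_le_sq_mul_sq Finset.univ d z
    have h2 : ∑ i, z i ^ 2 ≤ s^2 := Finset.sum_sq_le_sq_sum_of_nonneg fun i _ => hz i
    calc Z^2 ≤ D * ∑ i, z i ^2 := h1
      _ ≤ D * s^2 := by apply mul_le_mul_of_nonneg_left h2 hD0
  rcases eq_or_lt_of_le hs0 with hseq | hspos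
  · have hz0 : ∀ i ∈ Finset.univ, z i = 0 :=
      (Finset.sum_eq_zero_iff_of_nonneg fun i _ => hz i).1 hseq.symm
    have hZ0 : Z = 0 := by
      rw [hZ]; apply Finset.sum_eq_zero; intro i hi; rw [hz0 i hi]; ring
    rw [hZ0, ← hseq]; ring_nf; rfl
  · have key : 2 * B * Z * s ≤ (s * (B^2 + D)) * s := by
      nlinarith [sq_nonneg (s * B - Z), hZsq]
    exact le_of_mul_le_mul_right key hspos

lemma perk_bound (d z : Fin N → ℝ) (Wk epsk Rb m Q : ℝ) (hWk : 0 < Wk) (heps : 0 < epsk)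
    (hz : ∀ i, 0 ≤ z i) (hQ : Q = (∑ i, z i) + epsk) (hQle : Q ≤ Rb + epsk)
    (hm : m ≤ Wk * epsk / (Rb + epsk)^3) (hm0 : 0 ≤ m) :
    ∑ i, d i * ((Wk * ((∑ j, d j) - d i) * Q^2 - Wk * (Q - z i) * (2 * Q * (∑ j, d j))) / (Q^2)^2)
      ≤ -(m * ∑ i, d i^2) := by
  have hs0 : 0 ≤ ∑ i, z i := Finset.sum_nonneg fun i _ => hz i
  have hQpos : 0 < Q := by rw [hQ]; linarith
  have hQne : Q ≠ 0 := ne_of_gt hQpos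
  set B := ∑ j, d j with hB
  have hident : ∀ i ∈ Finset.univ,
      d i * ((Wk * (B - d i) * Q^2 - Wk * (Q - z i) * (2 * Q * B)) / (Q^2)^2)
      = (Wk / Q^3) * ((B*Q) * d i - Q * d i^2 - (2*B*Q) * d i + (2*B) * (d i * z i)) := by
    intro i _
    field_simp
    ring
  rw [Finset.sum_congr rfl hident, ← Finset.mul_sum]
  have hsplit : ∑ i, ((B*Q) * d i - Q * d i^2 - (2*B*Q) * d i + (2*B) * (d i * z i))
      = (B*Q) * B - Q * (∑ i, d i^2) - (2*B*Q) * B + (2*B) * (∑ i, d i * z i) := by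
    simp only [Finset.sum_add_distrib, Finset.sum_sub_distrib, ← Finset.mul_sum, hB]
  rw [hsplit]
  set D := ∑ i, d i^2 with hD
  set Z := ∑ i, d i * z i with hZ
  have hD0 : 0 ≤ D := Finset.sum_nonneg fun i _ => sq_nonneg _
  have hcore : 2 * B * Z ≤ (∑ i, z i) * (B^2 + D) := core_ineq d z hz
  have hinner : (B*Q) * B - Q * D - (2*B*Q) * B + (2*B) * Z ≤ -(epsk * D) := by
    have h1 : (B*Q) * B - Q * D - (2*B*Q) * B + (2*B) * Z = 2*B*Z - Q * (B^2 + D) := by ring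
    rw [h1, hQ]
    nlinarith [sq_nonneg B, hcore]
  have hWQ : 0 < Wk / Q^3 := by positivity
  calc (Wk / Q^3) * ((B*Q) * B - Q * D - (2*B*Q) * B + (2*B) * Z)
      ≤ (Wk / Q^3) * (-(epsk * D)) := by
        apply mul_le_mul_of_nonneg_left hinner hWQ.le
    _ = -((Wk * epsk / Q^3) * D) := by ring
    _ ≤ -(m * D) := by
        have hc : m ≤ Wk * epsk / Q^3 := by
          refine le_trans hm ?_
          apply div_le_div_of_nonneg_left (by positivity) (by positivity)
          exact pow_le_pow_left₀ hQpos.le hQle 3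
        have := mul_le_mul_of_nonneg_right hc hD0
        linarith


lemma hasDeriv_term (Wk bk A B y0 d0 : ℝ) (t : ℝ) (hQ : A + t*B ≠ 0) :
    HasDerivAt (fun s => d0 * (Wk * ((A + s*B) - (y0 + s*d0)) / (A + s*B)^2 - bk))
      (d0 * ((Wk * (B - d0) * (A + t*B)^2
        - Wk * ((A + t*B) - (y0 + t*d0)) * (2*(A + t*B)*B)) / ((A + t*B)^2)^2)) t := by
  have h1 : HasDerivAt (fun s : ℝ => A + s*B) B t := by
    simpa using ((hasDerivAt_id t).mul_const B).const_add A
  have h2 : HasDerivAt (fun s : ℝ => (A + s*B)^2) (2*(A+t*B)*B) t := by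
    have := h1.fun_pow 2
    exact this.congr_deriv (by push_cast; ring)
  have h4 : HasDerivAt (fun s : ℝ => y0 + s*d0) d0 t := by
    simpa using ((hasDerivAt_id t).mul_const d0).const_add y0
  have h3 : HasDerivAt (fun s : ℝ => (A + s*B) - (y0 + s*d0)) (B - d0) t := h1.sub h4
  have h5 := (h3.const_mul Wk).fun_div h2 (pow_ne_zero 2 hQ)
  have h6 := (h5.sub_const bk).const_mul d0
  convert h6 using 1

end Mono

section StrongMono
variable {N K : ℕ} (W ε β : Fin K → ℝ) (R : Fin N → ℝ)

lemma Gp_eq (x : Fin N → Fin K → ℝ) (i : Fin N) (k : Fin K) :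
    Gp W ε β x i k = W k * ((Sagg x k + ε k) - x i k) / (Sagg x k + ε k)^2 - β k := by
  unfold Gp phi' cC
  rw [show x i k + (Sagg x k - x i k + ε k) = Sagg x k + ε k from by ring,
      show Sagg x k - x i k + ε k = Sagg x k + ε k - x i k from by ring]

lemma col_sum_le {x : Fin N → Fin K → ℝ} (hx : feas R x) (k : Fin K) :
    ∑ i, x i k ≤ ∑ i, R i := by
  apply Finset.sum_le_sum
  intro i _
  calc x i k ≤ ∑ k', x i k' := Finset.single_le_sum (fun k' _ => (hx i).1 k') (Finset.mem_univ k)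
    _ = R i := (hx i).2

lemma strong_mono (hW : ∀ k, 0 < W k) (hε : ∀ k, 0 < ε k) (m : ℝ) (hm0 : 0 ≤ m)
    (hm : ∀ k, m ≤ W k * ε k / ((∑ i, R i) + ε k)^3)
    {x y : Fin N → Fin K → ℝ} (hx : feas R x) (hy : feas R y) :
    ∑ i, ∑ k, (x i k - y i k) * (Gp W ε β x i k - Gp W ε β y i k)
      ≤ -(m * ∑ i, ∑ k, (x i k - y i k)^2) := by
  classical
  -- the function along the segment and its derivative
  set hfun : ℝ → ℝ := fun t => ∑ i, ∑ k, (x i k - y i k) *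
      (W k * ((Sagg y k + ε k + t * ∑ j, (x j k - y j k)) - (y i k + t * (x i k - y i k)))
        / (Sagg y k + ε k + t * ∑ j, (x j k - y j k))^2 - β k) with hfundef
  set hd : ℝ → ℝ := fun t => ∑ i, ∑ k, (x i k - y i k) *
      ((W k * ((∑ j, (x j k - y j k)) - (x i k - y i k)) * (Sagg y k + ε k + t * ∑ j, (x j k - y j k))^2
        - W k * ((Sagg y k + ε k + t * ∑ j, (x j k - y j k)) - (y i k + t * (x i k - y i k)))
          * (2 * (Sagg y k + ε k + t * ∑ j, (x j k - y j k)) * (∑ j, (x j k - y j k))))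
        / ((Sagg y k + ε k + t * ∑ j, (x j k - y j k))^2)^2) with hddef
  -- the moving point is feasible on [0,1]
  have hzfeas : ∀ t : ℝ, 0 ≤ t → t ≤ 1 →
      feas R (fun i k => y i k + t * (x i k - y i k)) :=
    fun t h0 h1 i => seg_mem (hy i) (hx i) h0 h1
  have hQeq : ∀ (t : ℝ) (k : Fin K), Sagg y k + ε k + t * ∑ j, (x j k - y j k)
      = (∑ i, (y i k + t * (x i k - y i k))) + ε k := by
    intro t k
    rw [Finset.sum_add_distrib, ← Finset.mul_sum]
    unfold Sagg
    ring
  have hQpos : ∀ (t : ℝ), 0 ≤ t → t ≤ 1 → ∀ k,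
      0 < Sagg y k + ε k + t * ∑ j, (x j k - y j k) := by
    intro t h0 h1 k
    rw [hQeq]
    have : 0 ≤ ∑ i, (y i k + t * (x i k - y i k)) :=
      Finset.sum_nonneg fun i _ => ((hzfeas t h0 h1) i).1 k
    have := hε k
    linarith
  have hQle : ∀ (t : ℝ), 0 ≤ t → t ≤ 1 → ∀ k,
      Sagg y k + ε k + t * ∑ j, (x j k - y j k) ≤ (∑ i, R i) + ε k := by
    intro t h0 h1 k
    rw [hQeq]
    have := col_sum_le R (hzfeas t h0 h1) k
    linarith
  -- derivative
  have hasD : ∀ t : ℝ, 0 ≤ t → t ≤ 1 → HasDerivAt hfun (hd t) t := by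
    intro t h0 h1
    rw [hfundef, hddef]
    apply HasDerivAt.fun_sum
    intro i _
    apply HasDerivAt.fun_sum
    intro k _
    have := hasDeriv_term (W k) (β k) (Sagg y k + ε k) (∑ j, (x j k - y j k))
      (y i k) (x i k - y i k) t (hQpos t h0 h1 k).ne'
    exact this
  -- derivative bound on the open interval
  set DD := ∑ i, ∑ k, (x i k - y i k)^2 with hDDdef
  have hDD0 : 0 ≤ DD := Finset.sum_nonneg fun i _ => Finset.sum_nonneg fun k _ => sq_nonneg _
  have hbound : ∀ t : ℝ, 0 ≤ t → t ≤ 1 → hd t ≤ -(m * DD) := by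
    intro t h0 h1
    simp only [hddef]
    have hswap := Finset.sum_comm (s := (Finset.univ : Finset (Fin N)))
      (t := (Finset.univ : Finset (Fin K)))
      (f := fun i k => (x i k - y i k) *
      ((W k * ((∑ j, (x j k - y j k)) - (x i k - y i k)) * (Sagg y k + ε k + t * ∑ j, (x j k - y j k))^2
        - W k * ((Sagg y k + ε k + t * ∑ j, (x j k - y j k)) - (y i k + t * (x i k - y i k)))
          * (2 * (Sagg y k + ε k + t * ∑ j, (x j k - y j k)) * (∑ j, (x j k - y j k))))
        / ((Sagg y k + ε k + t * ∑ j, (x j k - y j k))^2)^2))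
    rw [hswap]
    have hk : ∀ k ∈ (Finset.univ : Finset (Fin K)),
        ∑ i, (x i k - y i k) *
        ((W k * ((∑ j, (x j k - y j k)) - (x i k - y i k)) * (Sagg y k + ε k + t * ∑ j, (x j k - y j k))^2
          - W k * ((Sagg y k + ε k + t * ∑ j, (x j k - y j k)) - (y i k + t * (x i k - y i k)))
            * (2 * (Sagg y k + ε k + t * ∑ j, (x j k - y j k)) * (∑ j, (x j k - y j k))))
          / ((Sagg y k + ε k + t * ∑ j, (x j k - y j k))^2)^2)
        ≤ -(m * ∑ i, (x i k - y i k)^2) := by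
      intro k _
      exact perk_bound (fun i => x i k - y i k) (fun i => y i k + t * (x i k - y i k))
        (W k) (ε k) (∑ i, R i) m (Sagg y k + ε k + t * ∑ j, (x j k - y j k))
        (hW k) (hε k) (fun i => ((hzfeas t h0 h1) i).1 k) (hQeq t k)
        (hQle t h0 h1 k) (hm k) hm0
    calc _ ≤ ∑ k, -(m * ∑ i, (x i k - y i k)^2) := Finset.sum_le_sum hk
      _ = -(m * DD) := by
        rw [hDDdef, Finset.sum_comm (f := fun i k => (x i k - y i k)^2), Finset.mul_sum]
        rw [← Finset.sum_neg_distrib]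
  -- antitone argument
  have hlin : ∀ t : ℝ, HasDerivAt (fun s : ℝ => (m * DD) * s) (m * DD) t := by
    intro t
    simpa using (hasDerivAt_id t).const_mul (m * DD)
  have hanti : AntitoneOn (fun t => hfun t + (m * DD) * t) (Set.Icc (0:ℝ) 1) := by
    apply antitoneOn_of_deriv_nonpos (convex_Icc 0 1)
    · intro t ht
      exact ((hasD t ht.1 ht.2).add (hlin t)).continuousAt.continuousWithinAt
    · intro t ht
      rw [interior_Icc] at ht
      exact ((hasD t ht.1.le ht.2.le).add (hlin t)).differentiableAt.differentiableWithinAt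
    · intro t ht
      rw [interior_Icc] at ht
      have hDer := (hasD t ht.1.le ht.2.le).fun_add (hlin t)
      rw [hDer.deriv]
      have := hbound t ht.1.le ht.2.le
      linarith
  have h10 : hfun 1 + (m * DD) * 1 ≤ hfun 0 + (m * DD) * 0 :=
    hanti (Set.mem_Icc.2 ⟨le_refl 0, zero_le_one⟩) (Set.mem_Icc.2 ⟨zero_le_one, le_refl 1⟩) zero_le_one
  -- endpoints
  have hend0 : hfun 0 = ∑ i, ∑ k, (x i k - y i k) * Gp W ε β y i k := by
    rw [hfundef]
    apply Finset.sum_congr rfl; intro i _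
    apply Finset.sum_congr rfl; intro k _
    rw [Gp_eq]
    norm_num
  have hend1 : hfun 1 = ∑ i, ∑ k, (x i k - y i k) * Gp W ε β x i k := by
    rw [hfundef]
    apply Finset.sum_congr rfl; intro i _
    apply Finset.sum_congr rfl; intro k _
    rw [Gp_eq]
    have hSx : Sagg y k + ε k + 1 * ∑ j, (x j k - y j k) = Sagg x k + ε k := by
      unfold Sagg
      rw [Finset.sum_sub_distrib]
      ring
    rw [hSx, show y i k + 1 * (x i k - y i k) = x i k from by ring]
  have hfinal : ∑ i, ∑ k, (x i k - y i k) * (Gp W ε β x i k - Gp W ε β y i k)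
      = hfun 1 - hfun 0 := by
    rw [hend0, hend1, ← Finset.sum_sub_distrib]
    apply Finset.sum_congr rfl; intro i _
    rw [← Finset.sum_sub_distrib]
    apply Finset.sum_congr rfl; intro k _
    ring
  rw [hfinal]
  linarith


lemma Sagg_nonneg {x : Fin N → Fin K → ℝ} (hx : feas R x) (k : Fin K) : 0 ≤ Sagg x k :=
  Finset.sum_nonneg fun i _ => (hx i).1 k

lemma Gp_diff_bound (hW : ∀ k, 0 < W k) (hε : ∀ k, 0 < ε k)
    {x y : Fin N → Fin K → ℝ} (hx : feas R x) (hy : feas R y) (i : Fin N) (k : Fin K) :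
    |Gp W ε β x i k - Gp W ε β y i k|
      ≤ (4 * W k * ((∑ i', R i') + ε k)^2 / (ε k)^4) * ∑ j, |x j k - y j k| := by
  have hWk := hW k
  have hεk := hε k
  set Qx := Sagg x k + ε k with hQx
  set Qy := Sagg y k + ε k with hQy
  set σ := ∑ j, |x j k - y j k| with hσ
  set Qb := (∑ i', R i') + ε k with hQb
  have hσ0 : 0 ≤ σ := Finset.sum_nonneg fun j _ => abs_nonneg _
  have hQx1 : ε k ≤ Qx := by rw [hQx]; have := Sagg_nonneg R hx k; linarith
  have hQy1 : ε k ≤ Qy := by rw [hQy]; have := Sagg_nonneg R hy k; linarith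
  have hQx2 : Qx ≤ Qb := by
    rw [hQx, hQb]; have := col_sum_le R hx k; unfold Sagg; linarith
  have hQy2 : Qy ≤ Qb := by
    rw [hQy, hQb]; have := col_sum_le R hy k; unfold Sagg; linarith
  have hQxpos : 0 < Qx := lt_of_lt_of_le hεk hQx1
  have hQypos : 0 < Qy := lt_of_lt_of_le hεk hQy1
  have hQbpos : 0 < Qb := lt_of_lt_of_le hεk (le_trans hQx1 hQx2)
  have hdiff : Gp W ε β x i k - Gp W ε β y i k
      = W k * ((Qx - x i k) * Qy^2 - (Qy - y i k) * Qx^2) / (Qx^2 * Qy^2) := by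
    have hQx0 : Sagg x k + ε k ≠ 0 := hQxpos.ne'
    have hQy0 : Sagg y k + ε k ≠ 0 := hQypos.ne'
    rw [Gp_eq, Gp_eq, hQx, hQy]
    field_simp
    ring
  have hSd : Sagg x k - Sagg y k = ∑ j, (x j k - y j k) := by
    unfold Sagg; rw [Finset.sum_sub_distrib]
  have hSabs : |Sagg x k - Sagg y k| ≤ σ := by
    rw [hSd, hσ]
    exact Finset.abs_sum_le_sum_abs _ _
  have hdabs : |x i k - y i k| ≤ σ := by
    rw [hσ]
    exact Finset.single_le_sum (f := fun j => |x j k - y j k|) (fun j _ => abs_nonneg _)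
      (Finset.mem_univ i)
  -- numerator bound
  have hnum : |(Qx - x i k) * Qy^2 - (Qy - y i k) * Qx^2| ≤ 4 * Qb^2 * σ := by
    have hsplit : (Qx - x i k) * Qy^2 - (Qy - y i k) * Qx^2
        = Qy^2 * ((Qx - x i k) - (Qy - y i k)) + (Qy - y i k) * (Qy - Qx) * (Qy + Qx) := by
      ring
    have hPy1 : 0 ≤ Qy - y i k := by
      rw [hQy]
      have h1 : y i k ≤ Sagg y k :=
        Finset.single_le_sum (f := fun j => y j k) (fun j _ => (hy j).1 k) (Finset.mem_univ i)
      linarith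
    have hPy2 : Qy - y i k ≤ Qb := by
      have := (hy i).1 k; linarith
    have h1 : |(Qx - x i k) - (Qy - y i k)| ≤ 2 * σ := by
      have : (Qx - x i k) - (Qy - y i k) = (Sagg x k - Sagg y k) - (x i k - y i k) := by
        rw [hQx, hQy]; ring
      rw [this]
      calc |(Sagg x k - Sagg y k) - (x i k - y i k)|
          ≤ |Sagg x k - Sagg y k| + |x i k - y i k| := abs_sub _ _
        _ ≤ 2 * σ := by linarith
    have h2 : |Qy - Qx| ≤ σ := by
      have : Qy - Qx = -(Sagg x k - Sagg y k) := by rw [hQx, hQy]; ring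
      rw [this, abs_neg]
      exact hSabs
    calc |(Qx - x i k) * Qy^2 - (Qy - y i k) * Qx^2|
        ≤ |Qy^2 * ((Qx - x i k) - (Qy - y i k))| + |(Qy - y i k) * (Qy - Qx) * (Qy + Qx)| := by
          rw [hsplit]; exact abs_add_le _ _
      _ ≤ Qb^2 * (2 * σ) + Qb * σ * (2 * Qb) := by
          apply add_le_add
          · rw [abs_mul]
            apply mul_le_mul _ h1 (abs_nonneg _) (by positivity)
            rw [abs_of_nonneg (show (0:ℝ) ≤ Qy^2 by positivity)]
            exact pow_le_pow_left₀ hQypos.le hQy2 2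
          · rw [abs_mul, abs_mul]
            apply mul_le_mul
            · apply mul_le_mul
              · rw [abs_of_nonneg hPy1]; exact hPy2
              · exact h2
              · exact abs_nonneg _
              · exact hQbpos.le
            · rw [abs_of_nonneg (by positivity)]; linarith
            · exact abs_nonneg _
            · positivity
      _ = 4 * Qb^2 * σ := by ring
  rw [hdiff, abs_div, abs_mul]
  rw [abs_of_nonneg hWk.le, abs_of_nonneg (show (0:ℝ) ≤ Qx^2 * Qy^2 by positivity)]
  have hden : (ε k)^4 ≤ Qx^2 * Qy^2 := by
    calc (ε k)^4 = (ε k)^2 * (ε k)^2 := by ring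
      _ ≤ Qx^2 * Qy^2 := by
          apply mul_le_mul
          · exact pow_le_pow_left₀ hεk.le hQx1 2
          · exact pow_le_pow_left₀ hεk.le hQy1 2
          · positivity
          · positivity
  calc W k * |(Qx - x i k) * Qy^2 - (Qy - y i k) * Qx^2| / (Qx^2 * Qy^2)
      ≤ W k * (4 * Qb^2 * σ) / (ε k)^4 := by
        apply div_le_div₀ (by positivity) _ (by positivity) hden
        exact mul_le_mul_of_nonneg_left hnum hWk.le
    _ = (4 * W k * Qb^2 / (ε k)^4) * σ := by ring

lemma lipschitz_sq (hW : ∀ k, 0 < W k) (hε : ∀ k, 0 < ε k) (L : ℝ)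
    (hL : ∀ k, (N:ℝ) * (4 * W k * ((∑ i', R i') + ε k)^2 / (ε k)^4) ≤ L)
    {x y : Fin N → Fin K → ℝ} (hx : feas R x) (hy : feas R y) :
    ∑ i, ∑ k, (Gp W ε β x i k - Gp W ε β y i k)^2
      ≤ L^2 * ∑ i, ∑ k, (x i k - y i k)^2 := by
  have hCnn : ∀ k, 0 ≤ 4 * W k * ((∑ i', R i') + ε k)^2 / (ε k)^4 := by
    intro k; have := hW k; have := hε k; positivity
  have hkey : ∀ i k, (Gp W ε β x i k - Gp W ε β y i k)^2
      ≤ ((4 * W k * ((∑ i', R i') + ε k)^2 / (ε k)^4))^2 * ((N:ℝ) * ∑ j, (x j k - y j k)^2) := by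
    intro i k
    have h1 := Gp_diff_bound W ε β R hW hε hx hy i k
    have h2 : (Gp W ε β x i k - Gp W ε β y i k)^2
        ≤ ((4 * W k * ((∑ i', R i') + ε k)^2 / (ε k)^4) * ∑ j, |x j k - y j k|)^2 := by
      rw [← sq_abs]
      apply pow_le_pow_left₀ (abs_nonneg _) h1
    have h3 : (∑ j, |x j k - y j k|)^2 ≤ (N:ℝ) * ∑ j, (x j k - y j k)^2 := by
      have := Finset.sum_mul_sq_le_sq_mul_sq Finset.univ (fun j => |x j k - y j k|) (fun _ => (1:ℝ))
      simp only [mul_one, one_pow, sq_abs] at this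
      calc (∑ j, |x j k - y j k|)^2 ≤ (∑ j, (x j k - y j k)^2) * (∑ _j : Fin N, (1:ℝ)) := this
        _ = (N:ℝ) * ∑ j, (x j k - y j k)^2 := by
            rw [Finset.sum_const, Finset.card_univ, Fintype.card_fin]
            ring
    calc (Gp W ε β x i k - Gp W ε β y i k)^2
        ≤ ((4 * W k * ((∑ i', R i') + ε k)^2 / (ε k)^4) * ∑ j, |x j k - y j k|)^2 := h2
      _ = ((4 * W k * ((∑ i', R i') + ε k)^2 / (ε k)^4))^2 * (∑ j, |x j k - y j k|)^2 := by ring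
      _ ≤ _ := by
          apply mul_le_mul_of_nonneg_left h3
          positivity
  calc ∑ i, ∑ k, (Gp W ε β x i k - Gp W ε β y i k)^2
      ≤ ∑ i : Fin N, ∑ k, ((4 * W k * ((∑ i', R i') + ε k)^2 / (ε k)^4))^2
          * ((N:ℝ) * ∑ j, (x j k - y j k)^2) :=
        Finset.sum_le_sum fun i _ => Finset.sum_le_sum fun k _ => hkey i k
    _ = ∑ k, (((N:ℝ) * (4 * W k * ((∑ i', R i') + ε k)^2 / (ε k)^4))^2
          * ∑ j, (x j k - y j k)^2) := by
        rw [Finset.sum_comm]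
        apply Finset.sum_congr rfl; intro k _
        rw [Finset.sum_const, Finset.card_univ, Fintype.card_fin]
        push_cast
        ring
    _ ≤ ∑ k, (L^2 * ∑ j, (x j k - y j k)^2) := by
        apply Finset.sum_le_sum; intro k _
        apply mul_le_mul_of_nonneg_right
        · exact pow_le_pow_left₀ (mul_nonneg (Nat.cast_nonneg N) (hCnn k)) (hL k) 2
        · exact Finset.sum_nonneg fun j _ => sq_nonneg _
    _ = L^2 * ∑ i, ∑ k, (x i k - y i k)^2 := by
        rw [Finset.sum_comm (f := fun i k => (x i k - y i k)^2), Finset.mul_sum]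

end StrongMono

section Proj
variable {E : Type*} [NormedAddCommGroup E] [InnerProductSpace ℝ E]

lemma proj_exists {X : Set E} (hXc : IsCompact X) (hXne : X.Nonempty)
    (hseg : ∀ v ∈ X, ∀ w ∈ X, ∀ t : ℝ, 0 ≤ t → t ≤ 1 → v + t • (w - v) ∈ X) (e : E) :
    ∃ p ∈ X, ∀ w ∈ X, (inner ℝ (e - p) (w - p) : ℝ) ≤ 0 := by
  obtain ⟨p, hpX, hmin⟩ := hXc.exists_isMinOn hXne
    ((continuous_const.sub continuous_id).norm.continuousOn
      : ContinuousOn (fun w => ‖e - w‖) X)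
  refine ⟨p, hpX, fun w hw => ?_⟩
  have key : ∀ t : ℝ, 0 < t → t ≤ 1 → 2 * (inner ℝ (e - p) (w - p) : ℝ) ≤ t * ‖w - p‖^2 := by
    intro t ht0 ht1
    have hq := hseg p hpX w hw t ht0.le ht1
    have h1 : ‖e - p‖ ≤ ‖e - (p + t • (w - p))‖ := hmin hq
    have h2 : e - (p + t • (w - p)) = (e - p) - t • (w - p) := by
      rw [sub_add_eq_sub_sub]
    rw [h2] at h1
    have h3 : ‖e - p‖^2 ≤ ‖(e - p) - t • (w - p)‖^2 := pow_le_pow_left₀ (norm_nonneg _) h1 2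
    rw [norm_sub_sq_real (e-p) (t • (w-p)), real_inner_smul_right, norm_smul] at h3
    have ht : ‖t‖ = t := by rw [Real.norm_eq_abs, abs_of_pos ht0]
    rw [ht] at h3
    have h4 : t * (2 * (inner ℝ (e - p) (w - p) : ℝ)) ≤ t * (t * ‖w - p‖^2) := by nlinarith
    exact le_of_mul_le_mul_left h4 ht0
  have := le_zero_of_le_mul (2 * (inner ℝ (e - p) (w - p) : ℝ)) (‖w - p‖^2) (by positivity) key
  linarith

lemma proj_nonexp {X : Set E} {a b p q : E} (hp : p ∈ X) (hq : q ∈ X)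
    (h1 : ∀ w ∈ X, (inner ℝ (a - p) (w - p) : ℝ) ≤ 0)
    (h2 : ∀ w ∈ X, (inner ℝ (b - q) (w - q) : ℝ) ≤ 0) :
    ‖p - q‖ ≤ ‖a - b‖ := by
  have k1 : (inner ℝ (a - p) (q - p) : ℝ) ≤ 0 := h1 q hq
  have k2 : (inner ℝ (b - q) (p - q) : ℝ) ≤ 0 := h2 p hp
  have k1' : 0 ≤ (inner ℝ (a - p) (p - q) : ℝ) := by
    have : (inner ℝ (a - p) (q - p) : ℝ) = - inner ℝ (a - p) (p - q) := by
      rw [show q - p = -(p - q) from by abel, inner_neg_right]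
    linarith [this ▸ k1]
  have hdecomp : a - b = ((a - p) - (b - q)) + (p - q) := by abel
  have hinner : (inner ℝ (a - b) (p - q) : ℝ)
      = inner ℝ (a - p) (p - q) - inner ℝ (b - q) (p - q) + inner ℝ (p - q) (p - q) := by
    rw [hdecomp, inner_add_left, inner_sub_left]
  have hsq : ‖p - q‖^2 ≤ (inner ℝ (a - b) (p - q) : ℝ) := by
    rw [hinner, real_inner_self_eq_norm_sq]
    linarith
  have hCS : (inner ℝ (a - b) (p - q) : ℝ) ≤ ‖a - b‖ * ‖p - q‖ := real_inner_le_norm _ _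
  rcases eq_or_lt_of_le (norm_nonneg (p - q)) with h0 | h0
  · rw [← h0]; exact norm_nonneg _
  · have : ‖p - q‖ * ‖p - q‖ ≤ ‖a - b‖ * ‖p - q‖ := by nlinarith
    exact le_of_mul_le_mul_right this h0

end Proj

section Main
variable {N K : ℕ}

lemma le_of_sq_le_sq (a b : ℝ) (h : a^2 ≤ b^2) (ha : 0 ≤ a) (hb : 0 ≤ b) : a ≤ b := by
  nlinarith

set_option maxHeartbeats 1000000 in
theorem main (hN : 1 ≤ N) (hK : 1 ≤ K) (W ε β : Fin K → ℝ) (R : Fin N → ℝ)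
    (hW : ∀ k, 0 < W k) (hε : ∀ k, 0 < ε k) (hR : ∀ i, 0 < R i) :
    ∃! x : Fin N → Fin K → ℝ, NEq W ε β R x := by
  classical
  haveI : NeZero K := ⟨by omega⟩
  haveI : NeZero N := ⟨by omega⟩
  set Rb := ∑ i, R i with hRbdef
  have hRb0 : 0 ≤ Rb := Finset.sum_nonneg fun i _ => (hR i).le
  -- constants
  set m := Finset.univ.inf' Finset.univ_nonempty (fun k : Fin K => W k * ε k / (Rb + ε k)^3)
    with hmdef
  have hm : ∀ k, m ≤ W k * ε k / (Rb + ε k)^3 := fun k => Finset.inf'_le _ (Finset.mem_univ k)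
  have hm0 : 0 < m := by
    rw [hmdef, Finset.lt_inf'_iff]
    intro k _
    have := hW k; have := hε k
    positivity
  set L1 := Finset.univ.sup' Finset.univ_nonempty
    (fun k : Fin K => (N:ℝ) * (4 * W k * (Rb + ε k)^2 / (ε k)^4)) with hL1def
  set L := max L1 m with hLdef
  have hmL : m ≤ L := le_max_right _ _
  have hL0 : 0 < L := lt_of_lt_of_le hm0 hmL
  have hL : ∀ k, (N:ℝ) * (4 * W k * (Rb + ε k)^2 / (ε k)^4) ≤ L := by
    intro k
    have h1 : (N:ℝ) * (4 * W k * (Rb + ε k)^2 / (ε k)^4) ≤ L1 :=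
      Finset.le_sup' (f := fun k : Fin K => (N:ℝ) * (4 * W k * (Rb + ε k)^2 / (ε k)^4))
        (Finset.mem_univ k)
    exact le_trans h1 (le_max_left _ _)
  -- uniqueness
  have huniq : ∀ x y, NEq W ε β R x → NEq W ε β R y → x = y := by
    intro x y hx hy
    obtain ⟨hxf, hxvi⟩ := NE_to_VI W ε β R hW hε hx
    obtain ⟨hyf, hyvi⟩ := NE_to_VI W ε β R hW hε hy
    have h1 := hxvi y hyf
    have h2 := hyvi x hxf
    have h3 := strong_mono W ε β R hW hε m hm0.le hm hxf hyf
    have hsplit : ∑ i, ∑ k, (x i k - y i k) * (Gp W ε β x i k - Gp W ε β y i k)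
        = -(∑ i, ∑ k, (y i k - x i k) * Gp W ε β x i k)
          - ∑ i, ∑ k, (x i k - y i k) * Gp W ε β y i k := by
      rw [← Finset.sum_neg_distrib, ← Finset.sum_sub_distrib]
      apply Finset.sum_congr rfl; intro i _
      rw [← Finset.sum_neg_distrib, ← Finset.sum_sub_distrib]
      apply Finset.sum_congr rfl; intro k _
      ring
    rw [hsplit] at h3
    have hDnn : 0 ≤ ∑ i, ∑ k, (x i k - y i k)^2 :=
      Finset.sum_nonneg fun i _ => Finset.sum_nonneg fun k _ => sq_nonneg _
    have hDz : ∑ i, ∑ k, (x i k - y i k)^2 = 0 := by nlinarith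
    funext i k
    have hrow := (Finset.sum_eq_zero_iff_of_nonneg
      (fun i _ => Finset.sum_nonneg fun k _ => sq_nonneg ((x i k - y i k)))).1 hDz i
      (Finset.mem_univ i)
    have hterm := (Finset.sum_eq_zero_iff_of_nonneg
      (fun k _ => sq_nonneg ((x i k - y i k)))).1 hrow k (Finset.mem_univ k)
    have := pow_eq_zero_iff (n := 2) (by norm_num) |>.1 hterm
    linarith [this]
  -- existence via Banach fixed point on Euclidean space
  set cur : EuclideanSpace ℝ (Fin N × Fin K) → (Fin N → Fin K → ℝ) :=
    fun v i k => v (i, k) with hcurdef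
  set mkE : (Fin N → Fin K → ℝ) → EuclideanSpace ℝ (Fin N × Fin K) :=
    fun x => (WithLp.equiv 2 ((Fin N × Fin K) → ℝ)).symm (fun q => x q.1 q.2) with hmkdef
  set X : Set (EuclideanSpace ℝ (Fin N × Fin K)) := {v | feas R (cur v)} with hXdef
  -- basic bridging
  have hinner : ∀ v w : EuclideanSpace ℝ (Fin N × Fin K),
      (inner ℝ v w : ℝ) = ∑ i, ∑ k, v (i,k) * w (i,k) := by
    intro v w
    rw [PiLp.inner_apply]
    simp only [RCLike.inner_apply, conj_trivial]
    rw [Fintype.sum_prod_type]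
    exact Finset.sum_congr rfl fun i _ => Finset.sum_congr rfl fun k _ => mul_comm _ _
  have hnormsq : ∀ v : EuclideanSpace ℝ (Fin N × Fin K),
      ‖v‖^2 = ∑ i, ∑ k, (v (i,k))^2 := by
    intro v
    rw [← real_inner_self_eq_norm_sq, hinner]
    apply Finset.sum_congr rfl; intro i _
    apply Finset.sum_congr rfl; intro k _
    ring
  -- X is nonempty
  have hx0feas : feas R (fun (i : Fin N) (_ : Fin K) => R i / K) := by
    intro i
    constructor
    · intro k
      have := hR i
      have : (0:ℝ) < K := by exact_mod_cast Nat.pos_of_ne_zero (NeZero.ne K)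
      positivity
    · rw [Finset.sum_const, Finset.card_univ, Fintype.card_fin, nsmul_eq_mul]
      have hKne : (K:ℝ) ≠ 0 := by exact_mod_cast NeZero.ne K
      field_simp
  have hx0X : mkE (fun (i : Fin N) (_ : Fin K) => R i / K) ∈ X := hx0feas
  have hXne : X.Nonempty := ⟨_, hx0X⟩
  -- X is closed
  have hcoord : ∀ p : Fin N × Fin K, Continuous (fun v : EuclideanSpace ℝ (Fin N × Fin K) => v p) :=
    fun p => (continuous_apply p).comp (PiLp.continuousLinearEquiv 2 ℝ _).continuous
  have hXclosed : IsClosed X := by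
    have hXeq : X = (⋂ p : Fin N × Fin K, {v : EuclideanSpace ℝ (Fin N × Fin K) | 0 ≤ v p})
        ∩ (⋂ i : Fin N, {v : EuclideanSpace ℝ (Fin N × Fin K) | ∑ k, v (i,k) = R i}) := by
      ext v
      simp only [Set.mem_inter_iff, Set.mem_iInter, Set.mem_setOf_eq, hXdef]
      constructor
      · intro h
        exact ⟨fun p => (h p.1).1 p.2, fun i => (h i).2⟩
      · intro h i
        exact ⟨fun k => h.1 (i,k), h.2 i⟩
    rw [hXeq]
    apply IsClosed.inter
    · exact isClosed_iInter fun p => isClosed_le continuous_const (hcoord p)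
    · exact isClosed_iInter fun i =>
        isClosed_eq (continuous_finset_sum _ fun k _ => hcoord (i,k)) continuous_const
  -- X is compact
  have hXcompact : IsCompact X := by
    apply Metric.isCompact_of_isClosed_isBounded hXclosed
    apply (Metric.isBounded_closedBall (x := (0:EuclideanSpace ℝ (Fin N × Fin K))) (r := Rb)).subset
    intro v hv
    rw [mem_closedBall_zero_iff]
    have hvf : feas R (cur v) := hv
    have h1 : ‖v‖^2 ≤ Rb^2 := by
      rw [hnormsq]
      have h2 : ∀ i, ∑ k, (v (i,k))^2 ≤ (R i)^2 := by
        intro i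
        calc ∑ k, (v (i,k))^2 ≤ (∑ k, v (i,k))^2 :=
              Finset.sum_sq_le_sq_sum_of_nonneg fun k _ => (hvf i).1 k
          _ = (R i)^2 := by rw [(hvf i).2]
      calc ∑ i, ∑ k, (v (i,k))^2 ≤ ∑ i, (R i)^2 := Finset.sum_le_sum fun i _ => h2 i
        _ ≤ (∑ i, R i)^2 := Finset.sum_sq_le_sq_sum_of_nonneg fun i _ => (hR i).le
        _ = Rb^2 := by rw [hRbdef]
    exact le_of_sq_le_sq _ _ h1 (norm_nonneg v) hRb0
  -- segments stay in X
  have hseg : ∀ v ∈ X, ∀ w ∈ X, ∀ t : ℝ, 0 ≤ t → t ≤ 1 → v + t • (w - v) ∈ X := by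
    intro v hv w hw t h0 h1
    show feas R (cur (v + t • (w - v)))
    intro i
    have : cur (v + t • (w - v)) i = fun k => cur v i k + t * (cur w i k - cur v i k) := rfl
    rw [this]
    exact seg_mem (hv i) (hw i) h0 h1
  -- the gradient field and the map
  set Gv : EuclideanSpace ℝ (Fin N × Fin K) → EuclideanSpace ℝ (Fin N × Fin K) :=
    fun v => mkE (Gp W ε β (cur v)) with hGvdef
  set γ := m / L^2 with hγdef
  have hγ0 : 0 < γ := by positivity
  -- contraction constant
  have hmLsq : m^2 / L^2 ≤ 1 := by
    rw [div_le_one (by positivity)]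
    nlinarith
  have hc0 : 0 ≤ 1 - m^2/L^2 := by linarith
  set c := Real.sqrt (1 - m^2/L^2) with hcdef
  have hcsq : c^2 = 1 - m^2/L^2 := Real.sq_sqrt hc0
  have hc1 : c < 1 := by
    have h1 : c^2 < 1 := by
      rw [hcsq]
      have : 0 < m^2/L^2 := by positivity
      linarith
    nlinarith [Real.sqrt_nonneg (1 - m^2/L^2)]
  have hcnn : 0 ≤ c := Real.sqrt_nonneg _
  -- key contraction estimate for the unprojected map
  have hΦcontr : ∀ u v : EuclideanSpace ℝ (Fin N × Fin K), u ∈ X → v ∈ X →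
      ‖(u + γ • Gv u) - (v + γ • Gv v)‖ ≤ c * ‖u - v‖ := by
    intro u v hu hv
    have hufeas : feas R (cur u) := hu
    have hvfeas : feas R (cur v) := hv
    have hrw : (u + γ • Gv u) - (v + γ • Gv v) = (u - v) + γ • (Gv u - Gv v) := by
      rw [smul_sub]; abel
    have hmono := strong_mono W ε β R hW hε m hm0.le hm hufeas hvfeas
    have hlip := lipschitz_sq W ε β R hW hε L hL hufeas hvfeas
    have hi1 : (inner ℝ (u - v) (Gv u - Gv v) : ℝ)
        = ∑ i, ∑ k, (cur u i k - cur v i k) * (Gp W ε β (cur u) i k - Gp W ε β (cur v) i k) := by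
      rw [hinner]
      rfl
    have hi2 : ‖Gv u - Gv v‖^2
        = ∑ i, ∑ k, (Gp W ε β (cur u) i k - Gp W ε β (cur v) i k)^2 := by
      rw [hnormsq]
      rfl
    have hi3 : ‖u - v‖^2 = ∑ i, ∑ k, (cur u i k - cur v i k)^2 := by
      rw [hnormsq]
      rfl
    have hsq : ‖(u - v) + γ • (Gv u - Gv v)‖^2 ≤ (c * ‖u - v‖)^2 := by
      rw [norm_add_sq_real, real_inner_smul_right, norm_smul, Real.norm_eq_abs,
        abs_of_pos hγ0]
      have e1 : (inner ℝ (u - v) (Gv u - Gv v) : ℝ) ≤ -(m * ‖u - v‖^2) := by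
        rw [hi1, hi3]; exact hmono
      have e2 : ‖Gv u - Gv v‖^2 ≤ L^2 * ‖u - v‖^2 := by
        rw [hi2, hi3]; exact hlip
      have e3 : (γ * ‖Gv u - Gv v‖)^2 = γ^2 * ‖Gv u - Gv v‖^2 := by ring
      have hγL : γ^2 * (L^2 * ‖u - v‖^2) = (m^2/L^2) * ‖u - v‖^2 := by
        rw [hγdef]; field_simp
      have hcc : (c * ‖u - v‖)^2 = (1 - m^2/L^2) * ‖u - v‖^2 := by
        rw [mul_pow, hcsq]
      rw [e3, hcc]
      have e4 : γ^2 * ‖Gv u - Gv v‖^2 ≤ (m^2/L^2) * ‖u - v‖^2 := by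
        rw [← hγL]
        apply mul_le_mul_of_nonneg_left e2 (by positivity)
      have e1' : 2 * (γ * (inner ℝ (u-v) (Gv u - Gv v) : ℝ))
          ≤ -(2 * (m^2/L^2 * ‖u - v‖^2)) := by
        have h := mul_le_mul_of_nonneg_left e1 hγ0.le
        calc 2 * (γ * (inner ℝ (u-v) (Gv u - Gv v) : ℝ))
            ≤ 2 * (γ * (-(m * ‖u - v‖^2))) := by linarith
          _ = -(2 * (m^2/L^2 * ‖u - v‖^2)) := by
              rw [hγdef]; field_simp
      linarith [e1', e4]
    rw [hrw]
    exact le_of_sq_le_sq _ _ hsq (norm_nonneg _) (by positivity)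
  -- projection
  have hproj := fun e => proj_exists hXcompact hXne hseg e
  choose P hPX hPchar using hproj
  -- Banach fixed point on the subtype
  haveI : Nonempty X := ⟨⟨_, hx0X⟩⟩
  haveI : CompleteSpace X := hXclosed.completeSpace_coe
  set T : X → X := fun u => ⟨P (u.1 + γ • Gv u.1), hPX _⟩ with hTdef
  have hTlip : ∀ u v : X, dist (T u) (T v) ≤ c * dist u v := by
    intro u v
    have h1 : dist (T u) (T v) = ‖P (u.1 + γ • Gv u.1) - P (v.1 + γ • Gv v.1)‖ := by
      rw [Subtype.dist_eq, dist_eq_norm]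
    have h2 := proj_nonexp (hPX (u.1 + γ • Gv u.1)) (hPX (v.1 + γ • Gv v.1))
      (hPchar (u.1 + γ • Gv u.1)) (hPchar (v.1 + γ • Gv v.1))
    have h3 := hΦcontr u.1 v.1 u.2 v.2
    rw [h1, Subtype.dist_eq, dist_eq_norm]
    exact le_trans h2 h3
  have hcontr : ContractingWith c.toNNReal T := by
    constructor
    · rw [← NNReal.coe_lt_coe, Real.coe_toNNReal c hcnn, NNReal.coe_one]
      exact hc1
    · apply LipschitzWith.of_dist_le_mul
      intro u v
      rw [Real.coe_toNNReal c hcnn]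
      exact hTlip u v
  set xf := hcontr.fixedPoint T with hxfdef
  have hfix : T xf = xf := hcontr.fixedPoint_isFixedPt
  have hfixval : P (xf.1 + γ • Gv xf.1) = xf.1 := congrArg Subtype.val hfix
  -- derive the variational inequality
  have hVI : VIx W ε β R (cur xf.1) := by
    refine ⟨xf.2, fun w hwfeas => ?_⟩
    have hwX : mkE w ∈ X := by
      show feas R (cur (mkE w))
      exact hwfeas
    have hchar := hPchar (xf.1 + γ • Gv xf.1) (mkE w) hwX
    rw [hfixval] at hchar
    rw [show xf.1 + γ • Gv xf.1 - xf.1 = γ • Gv xf.1 from by abel] at hchar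
    rw [real_inner_smul_left] at hchar
    have hinn : (inner ℝ (Gv xf.1) (mkE w - xf.1) : ℝ)
        = ∑ i, ∑ k, (w i k - cur xf.1 i k) * Gp W ε β (cur xf.1) i k := by
      rw [hinner]
      apply Finset.sum_congr rfl; intro i _
      apply Finset.sum_congr rfl; intro k _
      show Gp W ε β (cur xf.1) i k * (w i k - xf.1 (i,k)) = _
      ring
    rw [hinn] at hchar
    nlinarith [hchar]
  have hNE := VI_to_NE W ε β R hW hε hVI
  exact ⟨cur xf.1, hNE, fun y hy => huniq y (cur xf.1) hy hNE⟩

end Main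
end Blotto

/-- The Blotto lossy Tullock game (Section V-B): budgets `R_i > 0`, simplex-type
strategy sets, payoffs `u_i(x) = Σ_k [W_k x_{i,k}/(Σ_j x_{j,k} + ε_k) − β_k x_{i,k}]`;
the game admits exactly one Nash equilibrium. -/
theorem stmt11 (N K : ℕ) (hN : 1 ≤ N) (hK : 1 ≤ K)
    (W ε : Fin K → ℝ) (β : Fin K → ℝ)
    (hW : ∀ k, 0 < W k) (hε : ∀ k, 0 < ε k)
    (R : Fin N → ℝ) (hR : ∀ i, 0 < R i) :
    let X : Fin N → Set (Fin K → ℝ) := fun i =>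
      {x | (∀ k, 0 ≤ x k) ∧ ∑ k, x k = R i}
    let u : Fin N → (Fin N → Fin K → ℝ) → ℝ := fun i x =>
      ∑ k, (W k * x i k / ((∑ j, x j k) + ε k) - β k * x i k)
    ∃! xb : Fin N → Fin K → ℝ,
      (∀ i, xb i ∈ X i) ∧
      ∀ i : Fin N, ∀ y ∈ X i, u i (Function.update xb i y) ≤ u i xb := by
  intro X u
  exact Blotto.main hN hK W ε β R hW hε hR
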